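/- Let b ∈ L¹(ℝⁿ) be supported on a cube Q = Q(c, s), let E ⊆ Q(c, ρ) be a Borel set with λ |E| = ∫ b, and let K be a kernel satisfying the smoothness condition |K(y,z)-K(y,c)| ≤ C|c-z|^δ|c-y|^{-n-δ} for |c-z| ≤ |c-y|/2. Then ∫_{ℝⁿ \ (Q(c, 2√n s) ∪ Q(c, 2√n ρ))} |T(b − λ𝟙_E)(y)| dy ≤ C'(‖b‖_{L¹} + λ|E|) ≤ 2C'‖b‖_{L¹}, where T is the integral operator with kernel K. -/

import Mathlib

open MeasureTheory Filter Set
open scoped ENNReal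

noncomputable section

/-- The axis-parallel cube centered at `x` with side length `r`. -/
def cube {n : ℕ} (x : EuclideanSpace ℝ (Fin n)) (r : ℝ) :
    Set (EuclideanSpace ℝ (Fin n)) := {y | ∀ i, |y i - x i| < r / 2}

lemma norm_le_of_mem_cube {n : ℕ} {c z : EuclideanSpace ℝ (Fin n)} {r : ℝ} (hr : 0 ≤ r)
    (hz : z ∈ cube c r) : ‖c - z‖ ≤ Real.sqrt n * r / 2 := by
  rw [EuclideanSpace.norm_eq]
  have hsum : (∑ i, ‖(c - z) i‖ ^ 2) ≤ (n : ℝ) * (r / 2) ^ 2 := by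
    calc (∑ i, ‖(c - z) i‖ ^ 2) ≤ ∑ _i : Fin n, (r / 2) ^ 2 := by
          apply Finset.sum_le_sum
          intro i _
          have h1 : ‖(c - z) i‖ = |z i - c i| := by
            simp [Real.norm_eq_abs, abs_sub_comm]
          rw [h1]
          have := (hz i).le
          nlinarith [abs_nonneg (z i - c i)]
      _ = (n : ℝ) * (r / 2) ^ 2 := by simp [Finset.sum_const, nsmul_eq_mul]
  calc Real.sqrt (∑ i, ‖(c - z) i‖ ^ 2) ≤ Real.sqrt ((n : ℝ) * (r / 2) ^ 2) :=
        Real.sqrt_le_sqrt hsum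
    _ = Real.sqrt n * (r / 2) := by
        rw [Real.sqrt_mul (Nat.cast_nonneg n), Real.sqrt_sq (by linarith)]
    _ = Real.sqrt n * r / 2 := by ring

lemma norm_ge_of_not_mem_cube {n : ℕ} {c y : EuclideanSpace ℝ (Fin n)} {r : ℝ}
    (h : y ∉ cube c (2 * Real.sqrt n * r)) : Real.sqrt n * r ≤ ‖y - c‖ := by
  simp only [cube, mem_setOf_eq, not_forall, not_lt] at h
  obtain ⟨i, hi⟩ := h
  have h2 : Real.sqrt n * r ≤ |y i - c i| := by
    calc Real.sqrt n * r = 2 * Real.sqrt n * r / 2 := by ring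
      _ ≤ |y i - c i| := hi
  calc Real.sqrt n * r ≤ |y i - c i| := h2
    _ = Real.sqrt (‖(y - c) i‖ ^ 2) := by
        simp [Real.norm_eq_abs, Real.sqrt_sq_eq_abs]
    _ ≤ Real.sqrt (∑ j, ‖(y - c) j‖ ^ 2) := by
        apply Real.sqrt_le_sqrt
        exact Finset.single_le_sum (f := fun j => ‖(y - c) j‖ ^ 2)
          (fun j _ => sq_nonneg _) (Finset.mem_univ i)
    _ = ‖y - c‖ := (EuclideanSpace.norm_eq _).symm

lemma cube_subset_cube {n : ℕ} {c : EuclideanSpace ℝ (Fin n)} {r r' : ℝ} (h : r ≤ r') :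
    cube c r ⊆ cube c r' := fun z hz i => lt_of_lt_of_le (hz i) (by linarith)

lemma volume_cube_lt_top {n : ℕ} {c : EuclideanSpace ℝ (Fin n)} {r : ℝ} (hr : 0 < r) :
    volume (cube c r) < ⊤ := by
  have hsub : cube c r ⊆ Metric.closedBall c (Real.sqrt n * r / 2) := by
    intro z hz
    rw [Metric.mem_closedBall, dist_eq_norm, ← norm_sub_rev]
    exact norm_le_of_mem_cube hr.le hz
  exact lt_of_le_of_lt (measure_mono hsub) measure_closedBall_lt_top

lemma measurableSet_cube {n : ℕ} (x : EuclideanSpace ℝ (Fin n)) (r : ℝ) :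
    MeasurableSet (cube x r) := by
  have heq : cube x r =
      ⋂ i, (fun y : EuclideanSpace ℝ (Fin n) => |y i - x i|) ⁻¹' Iio (r / 2) := by
    ext y; simp [cube]
  rw [heq]
  refine MeasurableSet.iInter fun i => ?_
  have hcont : Continuous fun y : EuclideanSpace ℝ (Fin n) => |y i - x i| :=
    ((EuclideanSpace.proj i).continuous.sub continuous_const).abs
  exact hcont.measurable measurableSet_Iio

lemma tail_bound (n : ℕ) (hn : 0 < n) (p : ℝ) (hp : (n : ℝ) < p) :
    ∃ I : ℝ≥0∞, I < ⊤ ∧ ∀ R : ℝ, 0 < R →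
      (∫⁻ y : EuclideanSpace ℝ (Fin n) in {y | R ≤ ‖y‖}, ENNReal.ofReal (‖y‖ ^ (-p))) =
        ENNReal.ofReal (R ^ ((n : ℝ) - p)) * I := by
  set I : ℝ≥0∞ := ∫⁻ x : EuclideanSpace ℝ (Fin n) in {x | 1 ≤ ‖x‖}, ENNReal.ofReal (‖x‖ ^ (-p))
    with hIdef
  have hfin : I < ⊤ := by
    have hb : ∀ x : EuclideanSpace ℝ (Fin n), x ∈ {x : EuclideanSpace ℝ (Fin n) | 1 ≤ ‖x‖} →
        ENNReal.ofReal (‖x‖ ^ (-p)) ≤ ENNReal.ofReal ((2:ℝ) ^ p * (1 + ‖x‖) ^ (-p)) := by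
      intro x hx
      simp only [mem_setOf_eq] at hx
      apply ENNReal.ofReal_le_ofReal
      have h1 : (1 : ℝ) + ‖x‖ ≤ 2 * ‖x‖ := by linarith
      have h2 : (2 * ‖x‖) ^ (-p) ≤ (1 + ‖x‖) ^ (-p) := by
        apply Real.rpow_le_rpow_of_nonpos (by positivity) h1 (by linarith)
      calc ‖x‖ ^ (-p) = 2 ^ p * (2 * ‖x‖) ^ (-p) := by
            rw [Real.mul_rpow (by norm_num) (by positivity), ← mul_assoc,
              ← Real.rpow_add (by norm_num), add_neg_cancel, Real.rpow_zero, one_mul]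
        _ ≤ 2 ^ p * (1 + ‖x‖) ^ (-p) := by
            have : (0:ℝ) < 2 ^ p := by positivity
            nlinarith [h2]
    calc I ≤ ∫⁻ x : EuclideanSpace ℝ (Fin n) in {x | 1 ≤ ‖x‖},
            ENNReal.ofReal ((2:ℝ) ^ p * (1 + ‖x‖) ^ (-p)) := by
          apply setLIntegral_mono' ?_ hb
          exact measurableSet_le measurable_const measurable_norm
      _ ≤ ∫⁻ x : EuclideanSpace ℝ (Fin n), ENNReal.ofReal ((2:ℝ) ^ p * (1 + ‖x‖) ^ (-p)) :=
          setLIntegral_le_lintegral _ _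
      _ = ∫⁻ x : EuclideanSpace ℝ (Fin n), ENNReal.ofReal ((2:ℝ) ^ p) *
            ENNReal.ofReal ((1 + ‖x‖) ^ (-p)) := by
          congr 1; ext x; rw [← ENNReal.ofReal_mul (by positivity)]
      _ = ENNReal.ofReal ((2:ℝ) ^ p) *
            ∫⁻ x : EuclideanSpace ℝ (Fin n), ENNReal.ofReal ((1 + ‖x‖) ^ (-p)) :=
          lintegral_const_mul' _ _ ENNReal.ofReal_ne_top
      _ < ⊤ := by
          apply ENNReal.mul_lt_top ENNReal.ofReal_lt_top
          have := finite_integral_one_add_norm (E := EuclideanSpace ℝ (Fin n)) (μ := volume)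
            (r := p) (by simpa [finrank_euclideanSpace] using hp)
          exact this
  refine ⟨I, hfin, fun R hR => ?_⟩
  have hset : MeasurableSet {y : EuclideanSpace ℝ (Fin n) | R ≤ ‖y‖} :=
    measurableSet_le measurable_const measurable_norm
  have hset1 : MeasurableSet {y : EuclideanSpace ℝ (Fin n) | 1 ≤ ‖y‖} :=
    measurableSet_le measurable_const measurable_norm
  set g : EuclideanSpace ℝ (Fin n) → ℝ≥0∞ := fun y => ENNReal.ofReal (‖y‖ ^ (-p)) with hg
  have hgmeas : Measurable g := by
    apply Measurable.ennreal_ofReal; fun_prop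
  set h : EuclideanSpace ℝ (Fin n) → ℝ≥0∞ :=
    fun y => indicator {y : EuclideanSpace ℝ (Fin n) | R ≤ ‖y‖} g y with hh
  have hmeas : Measurable h := hgmeas.indicator hset
  have hcomp : ∀ x : EuclideanSpace ℝ (Fin n), h (R • x) =
      ENNReal.ofReal (R ^ (-p)) *
        indicator {y : EuclideanSpace ℝ (Fin n) | 1 ≤ ‖y‖} g x := by
    intro x
    have hnorm : ‖R • x‖ = R * ‖x‖ := by
      rw [norm_smul, Real.norm_eq_abs, abs_of_pos hR]
    by_cases hx : (1 : ℝ) ≤ ‖x‖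
    · have hx' : R ≤ ‖R • x‖ := by rw [hnorm]; exact (le_mul_iff_one_le_right hR).2 hx
      rw [hh]
      simp only [indicator_of_mem (show R • x ∈ {y : EuclideanSpace ℝ (Fin n) | R ≤ ‖y‖} from hx'),
        indicator_of_mem (show x ∈ {y : EuclideanSpace ℝ (Fin n) | 1 ≤ ‖y‖} from hx), hg]
      rw [hnorm, Real.mul_rpow hR.le (norm_nonneg x),
        ENNReal.ofReal_mul (by positivity)]
    · have hx' : ¬ R ≤ ‖R • x‖ := by
        rw [hnorm, le_mul_iff_one_le_right hR]; exact hx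
      rw [hh]
      simp only [indicator_of_notMem
          (show R • x ∉ {y : EuclideanSpace ℝ (Fin n) | R ≤ ‖y‖} from hx'),
        indicator_of_notMem (show x ∉ {y : EuclideanSpace ℝ (Fin n) | 1 ≤ ‖y‖} from hx), mul_zero]
  have e1 : ENNReal.ofReal (((R : ℝ) ^ n)⁻¹) * ∫⁻ y, h y =
      ENNReal.ofReal (R ^ (-p)) * I := by
    have hmap := Measure.map_addHaar_smul (volume : Measure (EuclideanSpace ℝ (Fin n))) hR.ne'
    have := lintegral_map (μ := volume) hmeas (measurable_const_smul R)
    rw [hmap] at this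
    rw [finrank_euclideanSpace_fin, abs_of_pos (by positivity)] at this
    rw [lintegral_smul_measure, smul_eq_mul] at this
    rw [this]
    have : (fun x : EuclideanSpace ℝ (Fin n) => h (R • x)) = fun x =>
        ENNReal.ofReal (R ^ (-p)) *
          indicator {y : EuclideanSpace ℝ (Fin n) | 1 ≤ ‖y‖} g x := funext hcomp
    rw [this, lintegral_const_mul' _ _ ENNReal.ofReal_ne_top]
    congr 1
    exact lintegral_indicator hset1 g
  have hX : (∫⁻ y : EuclideanSpace ℝ (Fin n) in {y | R ≤ ‖y‖}, ENNReal.ofReal (‖y‖ ^ (-p)))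
      = ∫⁻ y, h y := (lintegral_indicator hset g).symm
  have hcancel : ENNReal.ofReal ((R : ℝ) ^ n) * ENNReal.ofReal (((R : ℝ) ^ n)⁻¹) = 1 := by
    rw [← ENNReal.ofReal_mul (by positivity), mul_inv_cancel₀ (by positivity), ENNReal.ofReal_one]
  calc (∫⁻ y : EuclideanSpace ℝ (Fin n) in {y | R ≤ ‖y‖}, ENNReal.ofReal (‖y‖ ^ (-p)))
      = (ENNReal.ofReal ((R : ℝ) ^ n) * ENNReal.ofReal (((R : ℝ) ^ n)⁻¹)) * ∫⁻ y, h y := by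
        rw [hcancel, one_mul, hX]
    _ = ENNReal.ofReal ((R : ℝ) ^ n) * (ENNReal.ofReal (((R : ℝ) ^ n)⁻¹) * ∫⁻ y, h y) :=
        mul_assoc _ _ _
    _ = ENNReal.ofReal ((R : ℝ) ^ n) * (ENNReal.ofReal (R ^ (-p)) * I) := by rw [e1]
    _ = ENNReal.ofReal (R ^ ((n : ℝ) - p)) * I := by
        rw [← mul_assoc, ← ENNReal.ofReal_mul (by positivity), ← Real.rpow_natCast R n,
          ← Real.rpow_add hR, sub_eq_add_neg]

set_option maxHeartbeats 1000000 in
/-- The bad-part estimate: with `b` supported in `Q(c,s)`, `E ⊆ Q(c,ρ)` Borel with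
`λ|E| = ∫ b`, and `K` smooth about `c`, one has
`∫_{ℝⁿ \ (Q(c,2√n s) ∪ Q(c,2√n ρ))} |T(b − λ𝟙_E)| ≤ C'(‖b‖₁ + λ|E|) ≤ 2C'‖b‖₁`. -/
theorem stmt18 (n : ℕ) (hn : 0 < n) (δ C : ℝ) (hδ : 0 < δ) (hC : 0 < C) :
    ∃ C' > (0 : ℝ), ∀ (K : EuclideanSpace ℝ (Fin n) → EuclideanSpace ℝ (Fin n) → ℂ)
      (b : EuclideanSpace ℝ (Fin n) → ℝ) (c : EuclideanSpace ℝ (Fin n))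
      (s ρ lam : ℝ) (E : Set (EuclideanSpace ℝ (Fin n))),
      0 < s → 0 < ρ → 0 < lam →
      Integrable b volume →
      Function.support b ⊆ cube c s →
      MeasurableSet E → E ⊆ cube c ρ →
      lam * (volume E).toReal = ∫ z, b z →
      (∀ y z : EuclideanSpace ℝ (Fin n), y ≠ c → ‖c - z‖ ≤ ‖c - y‖ / 2 →
        ‖K y z - K y c‖ ≤ C * ‖c - z‖ ^ δ / ‖c - y‖ ^ ((n : ℝ) + δ)) →
      (∫⁻ y in (cube c (2 * Real.sqrt n * s) ∪ cube c (2 * Real.sqrt n * ρ))ᶜ,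
          (‖∫ z, K y z * ((b z - lam * Set.indicator E 1 z : ℝ) : ℂ)‖₊ : ℝ≥0∞)) ≤
        ENNReal.ofReal (C' * ((∫ z, |b z|) + lam * (volume E).toReal)) ∧
      ENNReal.ofReal (C' * ((∫ z, |b z|) + lam * (volume E).toReal)) ≤
        ENNReal.ofReal (2 * C' * ∫ z, |b z|) := by
  have hδ' : (n : ℝ) < (n : ℝ) + δ := by linarith
  obtain ⟨I, hIfin, hI⟩ := tail_bound n hn ((n : ℝ) + δ) hδ'
  set p : ℝ := (n : ℝ) + δ with hp
  have hI0 : 0 ≤ I.toReal := ENNReal.toReal_nonneg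
  set C' : ℝ := C * (1/2 : ℝ) ^ δ * I.toReal + 1 with hC'
  have hC'pos : 0 < C' := by
    rw [hC']
    have h0 : (0:ℝ) ≤ C * (1/2 : ℝ) ^ δ * I.toReal := by positivity
    linarith
  refine ⟨C', hC'pos, ?_⟩
  intro K b c s ρ lam E hs hρ hlam hb hsupp hE hEsub hmean hK
  have hsqn : 0 < Real.sqrt n := Real.sqrt_pos.2 (by exact_mod_cast hn)
  set M : ℝ := max s ρ with hM
  have hM0 : 0 < M := lt_max_of_lt_left hs
  set R : ℝ := Real.sqrt n * M with hR
  have hR0 : 0 < R := by positivity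
  have hbabs : 0 ≤ ∫ z, |b z| := integral_nonneg fun z => abs_nonneg _
  have hvolE : volume E < ⊤ := lt_of_le_of_lt (measure_mono hEsub) (volume_cube_lt_top hρ)
  have hlamE : 0 ≤ lam * (volume E).toReal := by positivity
  set A : ℝ := (∫ z, |b z|) + lam * (volume E).toReal with hA
  have hA0 : 0 ≤ A := by rw [hA]; linarith
  have hble : lam * (volume E).toReal ≤ ∫ z, |b z| := by
    calc lam * (volume E).toReal = ∫ z, b z := hmean
      _ ≤ ∫ z, |b z| := integral_mono hb hb.abs fun z => le_abs_self _
  constructor; swap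
  · apply ENNReal.ofReal_le_ofReal
    rw [hA]
    nlinarith [hC'pos.le]
  -- main estimate
  have hind : Integrable (fun z => E.indicator (1 : EuclideanSpace ℝ (Fin n) → ℝ) z) volume :=
    (integrable_indicator_iff hE).2 ((integrableOn_const_iff (C := (1:ℝ))).2 (Or.inr hvolE))
  have hindint : ∫ z, E.indicator (1 : EuclideanSpace ℝ (Fin n) → ℝ) z = (volume E).toReal := by
    simpa [measureReal_def, Pi.one_def] using integral_indicator_const (1 : ℝ) hE
  set f : EuclideanSpace ℝ (Fin n) → ℝ := fun z => b z - lam * E.indicator 1 z with hf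
  have hfi : Integrable f volume := hb.sub (hind.const_mul lam)
  have hintf : ∫ z, f z = 0 := by
    rw [hf]
    rw [integral_sub hb (hind.const_mul lam), integral_const_mul, hindint, ← hmean, sub_self]
  have hsuppf : ∀ z, f z ≠ 0 → z ∈ cube c M := by
    intro z hz
    by_cases hbz : b z = 0
    · have hne : E.indicator (1 : EuclideanSpace ℝ (Fin n) → ℝ) z ≠ 0 := by
        intro h0; apply hz; rw [hf]; simp [hbz, h0]
      have hzE : z ∈ E := by
        by_contra hzE; exact hne (indicator_of_notMem hzE _)
      exact cube_subset_cube (le_max_right s ρ) (hEsub hzE)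
    · exact cube_subset_cube (le_max_left s ρ) (hsupp hbz)
  have hRle : ∀ y ∈ (cube c (2 * Real.sqrt n * s) ∪ cube c (2 * Real.sqrt n * ρ))ᶜ,
      R ≤ ‖y - c‖ := by
    intro y hy
    rw [mem_compl_iff, mem_union, not_or] at hy
    have h1 : Real.sqrt n * s ≤ ‖y - c‖ := norm_ge_of_not_mem_cube hy.1
    have h2 : Real.sqrt n * ρ ≤ ‖y - c‖ := norm_ge_of_not_mem_cube hy.2
    rw [hR, hM]
    rcases max_cases s ρ with ⟨h, _⟩ | ⟨h, _⟩ <;> rw [h] <;> assumption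
  have key : ∀ y ∈ (cube c (2 * Real.sqrt n * s) ∪ cube c (2 * Real.sqrt n * ρ))ᶜ,
      ‖∫ z, K y z * ((f z : ℝ) : ℂ)‖ ≤ (C * (R/2) ^ δ * A) * ‖y - c‖ ^ (-p) := by
    intro y hy
    have hRy : R ≤ ‖y - c‖ := hRle y hy
    have hy0 : 0 < ‖y - c‖ := lt_of_lt_of_le hR0 hRy
    have hyc : y ≠ c := by
      intro h; rw [h, sub_self, norm_zero] at hy0; exact lt_irrefl _ hy0
    set Cst : ℝ := C * (R/2) ^ δ / ‖y - c‖ ^ p with hCst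
    have hCst0 : 0 ≤ Cst := by positivity
    have bound : ∀ z, ‖(K y z - K y c) * ((f z : ℝ) : ℂ)‖ ≤
        Cst * (|b z| + lam * E.indicator 1 z) := by
      intro z
      have hind0 : (0:ℝ) ≤ E.indicator 1 z := indicator_nonneg (fun _ _ => zero_le_one) z
      by_cases hz : f z = 0
      · rw [norm_mul, hz]
        simp only [Complex.ofReal_zero, norm_zero, mul_zero]
        positivity
      · have hzc := hsuppf z hz
        have hcz : ‖c - z‖ ≤ R / 2 := by
          have := norm_le_of_mem_cube hM0.le hzc
          rw [hR]; linarith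
        have hhalf : ‖c - z‖ ≤ ‖c - y‖ / 2 := by
          rw [norm_sub_rev c y]; linarith
        have hKb2 : ‖K y z - K y c‖ ≤ Cst := by
          rw [hCst]
          calc ‖K y z - K y c‖ ≤ C * ‖c - z‖ ^ δ / ‖c - y‖ ^ p := hK y z hyc hhalf
            _ ≤ C * (R/2) ^ δ / ‖c - y‖ ^ p := by
                gcongr
            _ = C * (R/2) ^ δ / ‖y - c‖ ^ p := by rw [norm_sub_rev]
        have hfz : |f z| ≤ |b z| + lam * E.indicator 1 z := by
          rw [hf]
          calc |b z - lam * E.indicator 1 z| ≤ |b z| + |lam * E.indicator 1 z| :=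
                abs_sub _ _
            _ = |b z| + lam * E.indicator 1 z := by
                rw [abs_mul, abs_of_pos hlam, abs_of_nonneg hind0]
        calc ‖(K y z - K y c) * ((f z : ℝ) : ℂ)‖ = ‖K y z - K y c‖ * |f z| := by
              rw [norm_mul, Complex.norm_real, Real.norm_eq_abs]
          _ ≤ Cst * (|b z| + lam * E.indicator 1 z) :=
              mul_le_mul hKb2 hfz (abs_nonneg _) hCst0
    have hrhsint : Integrable (fun z => Cst * (|b z| + lam * E.indicator 1 z)) volume :=
      (hb.abs.add (hind.const_mul lam)).const_mul Cst
    have hrhsval : (∫ z, Cst * (|b z| + lam * E.indicator 1 z)) = Cst * A := by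
      rw [integral_const_mul, integral_add hb.abs (hind.const_mul lam), integral_const_mul,
        hindint, hA]
    have main : ‖∫ z, K y z * ((f z : ℝ) : ℂ)‖ ≤ Cst * A := by
      by_cases hint : Integrable (fun z => K y z * ((f z : ℝ) : ℂ)) volume
      · have hconst : Integrable (fun z => K y c * ((f z : ℝ) : ℂ)) volume :=
          hfi.ofReal.const_mul _
        have hg : Integrable (fun z => (K y z - K y c) * ((f z : ℝ) : ℂ)) volume := by
          have := hint.sub hconst
          simpa [sub_mul, Pi.sub_def] using this
        have heq : (∫ z, K y z * ((f z : ℝ) : ℂ)) =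
            ∫ z, (K y z - K y c) * ((f z : ℝ) : ℂ) := by
          have e2 : (∫ z, (K y z - K y c) * ((f z : ℝ) : ℂ))
              = (∫ z, K y z * ((f z : ℝ) : ℂ)) - ∫ z, K y c * ((f z : ℝ) : ℂ) := by
            simp_rw [sub_mul]
            exact integral_sub hint hconst
          have e3 : (∫ z, K y c * ((f z : ℝ) : ℂ)) = 0 := by
            rw [integral_const_mul]
            have e4 : (∫ z, ((f z : ℝ) : ℂ)) = ((∫ z, f z : ℝ) : ℂ) := integral_ofReal
            rw [e4, hintf]
            simp
          rw [e2, e3, sub_zero]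
        rw [heq]
        calc ‖∫ z, (K y z - K y c) * ((f z : ℝ) : ℂ)‖
            ≤ ∫ z, ‖(K y z - K y c) * ((f z : ℝ) : ℂ)‖ := norm_integral_le_integral_norm _
          _ ≤ ∫ z, Cst * (|b z| + lam * E.indicator 1 z) :=
              integral_mono hg.norm hrhsint bound
          _ = Cst * A := hrhsval
      · rw [integral_undef hint, norm_zero]
        positivity
    calc ‖∫ z, K y z * ((f z : ℝ) : ℂ)‖ ≤ Cst * A := main
      _ = (C * (R/2) ^ δ * A) * ‖y - c‖ ^ (-p) := by
          rw [hCst, Real.rpow_neg (norm_nonneg _)]; ring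
  have hUm : MeasurableSet ((cube c (2 * Real.sqrt n * s) ∪ cube c (2 * Real.sqrt n * ρ))ᶜ) :=
    ((measurableSet_cube c _).union (measurableSet_cube c _)).compl
  have hCRA0 : (0:ℝ) ≤ C * (R/2) ^ δ * A := by positivity
  have htrans : (∫⁻ y : EuclideanSpace ℝ (Fin n) in {y | R ≤ ‖y - c‖},
      ENNReal.ofReal (‖y - c‖ ^ (-p))) =
      ∫⁻ y : EuclideanSpace ℝ (Fin n) in {y | R ≤ ‖y‖}, ENNReal.ofReal (‖y‖ ^ (-p)) := by
    have hsetc : MeasurableSet {y : EuclideanSpace ℝ (Fin n) | R ≤ ‖y - c‖} :=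
      measurableSet_le measurable_const ((measurable_id.sub measurable_const).norm)
    have hset : MeasurableSet {y : EuclideanSpace ℝ (Fin n) | R ≤ ‖y‖} :=
      measurableSet_le measurable_const measurable_norm
    rw [← lintegral_indicator hsetc, ← lintegral_indicator hset]
    have hpt : ∀ y : EuclideanSpace ℝ (Fin n),
        indicator {y : EuclideanSpace ℝ (Fin n) | R ≤ ‖y - c‖}
          (fun y => ENNReal.ofReal (‖y - c‖ ^ (-p))) y
        = indicator {y : EuclideanSpace ℝ (Fin n) | R ≤ ‖y‖}
          (fun y => ENNReal.ofReal (‖y‖ ^ (-p))) (y - c) := by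
      intro y
      by_cases hyy : R ≤ ‖y - c‖ <;> simp [indicator, hyy]
    simp_rw [hpt, sub_eq_add_neg]
    exact lintegral_add_right_eq_self _ (-c)
  calc (∫⁻ y in (cube c (2 * Real.sqrt n * s) ∪ cube c (2 * Real.sqrt n * ρ))ᶜ,
        (‖∫ z, K y z * ((b z - lam * Set.indicator E 1 z : ℝ) : ℂ)‖₊ : ℝ≥0∞))
      ≤ ∫⁻ y in (cube c (2 * Real.sqrt n * s) ∪ cube c (2 * Real.sqrt n * ρ))ᶜ,
        ENNReal.ofReal ((C * (R/2) ^ δ * A) * ‖y - c‖ ^ (-p)) := by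
        apply setLIntegral_mono' hUm
        intro y hy
        rw [← ENNReal.ofReal_coe_nnreal, coe_nnnorm]
        exact ENNReal.ofReal_le_ofReal (key y hy)
    _ ≤ ∫⁻ y : EuclideanSpace ℝ (Fin n) in {y | R ≤ ‖y - c‖},
        ENNReal.ofReal ((C * (R/2) ^ δ * A) * ‖y - c‖ ^ (-p)) :=
        lintegral_mono_set hRle
    _ = ENNReal.ofReal (C * (R/2) ^ δ * A) * ∫⁻ y : EuclideanSpace ℝ (Fin n) in {y | R ≤ ‖y - c‖},
        ENNReal.ofReal (‖y - c‖ ^ (-p)) := by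
        simp_rw [ENNReal.ofReal_mul hCRA0]
        exact lintegral_const_mul' _ _ ENNReal.ofReal_ne_top
    _ = ENNReal.ofReal (C * (R/2) ^ δ * A) * (ENNReal.ofReal (R ^ ((n : ℝ) - p)) * I) := by
        rw [htrans, hI R hR0]
    _ = ENNReal.ofReal (C * (1/2 : ℝ) ^ δ * A) * I := by
        rw [← mul_assoc, ← ENNReal.ofReal_mul hCRA0]
        congr 2
        have hn_p : (n : ℝ) - p = -δ := by rw [hp]; ring
        rw [hn_p]
        have hRhalf : (R/2) ^ δ * R ^ (-δ) = (1/2 : ℝ) ^ δ := by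
          rw [Real.div_rpow hR0.le (by norm_num : (0:ℝ) ≤ 2), Real.rpow_neg hR0.le,
            Real.div_rpow (by norm_num : (0:ℝ) ≤ 1) (by norm_num : (0:ℝ) ≤ 2),
            Real.one_rpow]
          have hRδ : (0:ℝ) < R ^ δ := Real.rpow_pos_of_pos hR0 δ
          field_simp
        calc C * (R/2) ^ δ * A * R ^ (-δ) = C * A * ((R/2) ^ δ * R ^ (-δ)) := by ring
          _ = C * A * (1/2 : ℝ) ^ δ := by rw [hRhalf]
          _ = C * (1/2 : ℝ) ^ δ * A := by ring
    _ ≤ ENNReal.ofReal (C' * A) := by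
        rw [← ENNReal.ofReal_toReal hIfin.ne, ← ENNReal.ofReal_mul (by positivity)]
        apply ENNReal.ofReal_le_ofReal
        rw [hC']
        nlinarith [hA0, hI0, Real.rpow_pos_of_pos (by norm_num : (0:ℝ) < 1/2) δ, hC.le]
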